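/- Let p be an odd prime and C = ⟨g(x) + u p(x), u ā(x)⟩ a skew cyclic code of length n over R = F_p[u]/(u^2), where g(x) is monic of degree r, ā(x) ∈ F_p[x] is monic of degree t < r, x^n−1 = k(x)∗g(x) in R[x;θ], ā(x) | x^n−1 in F_p[x], ā(x) divides g(x) mod u, and ((x^n−1)/g)·u p(x) ∈ ⟨u ā(x)⟩. Then |C| = p^{2(n−r)} · p^{r−t}. -/

import Mathlib

open TrivSqZeroExt

theorem RingAut.one_apply' {R : Type*} [Ring R] (b : R) : (1 : RingAut R) b = b := rfl

/-- The skew polynomial ring `R[x;θ]`, as finitely supported coefficient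
sequences with multiplication twisted by the ring automorphism `θ`:
`(a x^i) * (b x^j) = a θ^i(b) x^{i+j}`. -/
def SkewPoly (R : Type*) [Ring R] (θ : RingAut R) : Type _ := ℕ →₀ R

namespace SkewPoly

variable {R : Type*} [Ring R] (θ : RingAut R)

/-- The skew-twisted convolution product. -/
noncomputable def mulAux (f g : ℕ →₀ R) : ℕ →₀ R :=
  f.sum fun i a => g.sum fun j b => Finsupp.single (i + j) (a * (θ ^ i) b)

theorem mulAux_zero_left (g : ℕ →₀ R) : mulAux θ 0 g = 0 := Finsupp.sum_zero_index

theorem mulAux_zero_right (f : ℕ →₀ R) : mulAux θ f 0 = 0 := by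
  simp [mulAux, Finsupp.sum_zero_index]

theorem mulAux_add_left (f f' g : ℕ →₀ R) :
    mulAux θ (f + f') g = mulAux θ f g + mulAux θ f' g := by
  unfold mulAux
  apply Finsupp.sum_add_index' <;> intros <;> simp [add_mul, Finsupp.single_add, Finsupp.sum_add]

theorem mulAux_add_right (f g g' : ℕ →₀ R) :
    mulAux θ f (g + g') = mulAux θ f g + mulAux θ f g' := by
  unfold mulAux
  rw [← Finsupp.sum_add]
  apply Finsupp.sum_congr
  intro i _
  apply Finsupp.sum_add_index' <;> intros <;> simp [mul_add, Finsupp.single_add]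

theorem one_mulAux (g : ℕ →₀ R) : mulAux θ (Finsupp.single 0 1) g = g := by
  unfold mulAux
  rw [Finsupp.sum_single_index]
  · simp [RingAut.one_apply', Finsupp.sum_single]
  · simp

theorem mulAux_one (f : ℕ →₀ R) : mulAux θ f (Finsupp.single 0 1) = f := by
  unfold mulAux
  have : ∀ i ∈ f.support, ((Finsupp.single 0 1 : ℕ →₀ R).sum fun j b =>
      Finsupp.single (i + j) (f i * (θ ^ i) b)) = Finsupp.single i (f i) := by
    intro i _
    rw [Finsupp.sum_single_index] <;> simp
  rw [Finsupp.sum_congr this, Finsupp.sum_single f]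

theorem mulAux_single_single (i j : ℕ) (a b : R) :
    mulAux θ (Finsupp.single i a) (Finsupp.single j b) =
      Finsupp.single (i + j) (a * (θ ^ i) b) := by
  unfold mulAux
  rw [Finsupp.sum_single_index, Finsupp.sum_single_index]
  · simp
  · rw [Finsupp.sum_single_index] <;> simp

theorem mulAux_assoc (f g h : ℕ →₀ R) :
    mulAux θ (mulAux θ f g) h = mulAux θ f (mulAux θ g h) := by
  induction f using Finsupp.induction_linear with
  | zero => simp [mulAux_zero_left]
  | add f f' hf hf' => simp [mulAux_add_left, hf, hf']
  | single i a =>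
    induction g using Finsupp.induction_linear with
    | zero => simp [mulAux_zero_left, mulAux_zero_right]
    | add g g' hg hg' => simp [mulAux_add_left, mulAux_add_right, hg, hg']
    | single j b =>
      induction h using Finsupp.induction_linear with
      | zero => simp [mulAux_zero_right]
      | add h h' hh hh' => simp [mulAux_add_right, hh, hh']
      | single k c =>
        rw [mulAux_single_single, mulAux_single_single, mulAux_single_single,
          mulAux_single_single]
        rw [add_assoc, mul_assoc, map_mul, pow_add]
        rfl

variable {θ}

noncomputable instance : AddCommGroup (SkewPoly R θ) := inferInstanceAs (AddCommGroup (ℕ →₀ R))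

/-- Reinterpret a skew polynomial as a finitely supported function. -/
def toFinsupp (f : SkewPoly R θ) : ℕ →₀ R := f

/-- Build a skew polynomial out of a finitely supported function. -/
def ofFinsupp (f : ℕ →₀ R) : SkewPoly R θ := f

noncomputable instance : Ring (SkewPoly R θ) where
  __ := (inferInstance : AddCommGroup (SkewPoly R θ))
  mul f g := mulAux θ (toFinsupp f) (toFinsupp g)
  one := Finsupp.single 0 1
  left_distrib f g h := mulAux_add_right θ (toFinsupp f) (toFinsupp g) (toFinsupp h)
  right_distrib f g h := mulAux_add_left θ (toFinsupp f) (toFinsupp g) (toFinsupp h)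
  zero_mul := mulAux_zero_left θ
  mul_zero := mulAux_zero_right θ
  mul_assoc := mulAux_assoc θ
  one_mul := one_mulAux θ
  mul_one := mulAux_one θ

variable (θ) in
/-- The constant skew polynomial `a`. -/
noncomputable def C (a : R) : SkewPoly R θ := ofFinsupp (Finsupp.single 0 a)

variable (θ) in
/-- The variable `x` of the skew polynomial ring. -/
noncomputable def X : SkewPoly R θ := ofFinsupp (Finsupp.single 1 1)

/-- The `n`-th coefficient of a skew polynomial. -/
def coeff (f : SkewPoly R θ) (n : ℕ) : R := toFinsupp f n

/-- The degree of a skew polynomial (`⊥` for the zero polynomial). -/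
def degree (f : SkewPoly R θ) : WithBot ℕ := (toFinsupp f).support.max

/-- The degree of a skew polynomial as a natural number. -/
def natDegree (f : SkewPoly R θ) : ℕ := WithBot.unbotD 0 (degree f)

/-- The leading coefficient of a skew polynomial. -/
def leadingCoeff (f : SkewPoly R θ) : R := coeff f (natDegree f)

/-- A skew polynomial is monic if its leading coefficient is `1`. -/
def Monic (f : SkewPoly R θ) : Prop := leadingCoeff f = 1

end SkewPoly

/-- The inclusion of `F_p[x]` into the skew polynomial ring
`(F_p + u F_p)[x;θ]` (coefficientwise `a ↦ a + u·0`); this is the natural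
embedding of `F_p[x]` as a subring of `R[x;θ]` since `θ` fixes `F_p`. -/
noncomputable def SkewPoly.ofPoly {p : ℕ}
    (θ : RingAut (DualNumber (ZMod p))) (f : Polynomial (ZMod p)) :
    SkewPoly (DualNumber (ZMod p)) θ :=
  SkewPoly.ofFinsupp
    (Finsupp.mapRange (inl : ZMod p → DualNumber (ZMod p)) (inl_zero (ZMod p)) f.toFinsupp.coeff)

/-- Reduction of a skew polynomial over `F_p + u F_p` modulo `u`, i.e. the
polynomial in `F_p[x]` whose coefficients are the first components of the
coefficients. -/
noncomputable def SkewPoly.fstPoly {p : ℕ}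
    {θ : RingAut (DualNumber (ZMod p))} (f : SkewPoly (DualNumber (ZMod p)) θ) :
    Polynomial (ZMod p) :=
  Polynomial.ofFinsupp (AddMonoidAlgebra.ofCoeff
    (Finsupp.mapRange TrivSqZeroExt.fst fst_zero (SkewPoly.toFinsupp f)))


section Aux

namespace SkewPoly

variable {R : Type*} [Ring R] {θ : RingAut R}

theorem mul_def' (f g : SkewPoly R θ) : f * g = mulAux θ (toFinsupp f) (toFinsupp g) := rfl

theorem ext' {f g : SkewPoly R θ} (h : ∀ i, coeff f i = coeff g i) : f = g := Finsupp.ext h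

@[simp] theorem coeff_add' (f g : SkewPoly R θ) (i : ℕ) :
    coeff (f + g) i = coeff f i + coeff g i := rfl

@[simp] theorem coeff_sub' (f g : SkewPoly R θ) (i : ℕ) :
    coeff (f - g) i = coeff f i - coeff g i := rfl

@[simp] theorem coeff_zero' (i : ℕ) : coeff (0 : SkewPoly R θ) i = 0 := rfl

theorem coeff_ofFinsupp (s : ℕ →₀ R) (i : ℕ) :
    coeff (ofFinsupp s : SkewPoly R θ) i = s i := rfl

theorem single_mul (k : ℕ) (a : R) (g : SkewPoly R θ) :
    (ofFinsupp (Finsupp.single k a) : SkewPoly R θ) * g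
      = ofFinsupp ((toFinsupp g).sum fun j b => Finsupp.single (k + j) (a * (θ ^ k) b)) := by
  rw [mul_def']
  unfold mulAux
  show (Finsupp.sum (Finsupp.single k a) _ : ℕ →₀ R) = _
  rw [Finsupp.sum_single_index]
  · rfl
  · simp

theorem coeff_single_mul (k : ℕ) (a : R) (g : SkewPoly R θ) (m : ℕ) :
    coeff ((ofFinsupp (Finsupp.single k a) : SkewPoly R θ) * g) m
      = if k ≤ m then a * (θ ^ k) (coeff g (m - k)) else 0 := by
  classical
  rw [single_mul, coeff_ofFinsupp, Finsupp.sum_apply]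
  rw [Finsupp.sum]
  by_cases hkm : k ≤ m
  · rw [if_pos hkm]
    have h1 : ∀ j ∈ (toFinsupp g).support, j ≠ m - k →
        (Finsupp.single (k + j) (a * (θ ^ k) (toFinsupp g j))) m = 0 := by
      intro j _ hj
      rw [Finsupp.single_apply, if_neg (by omega)]
    by_cases h : m - k ∈ (toFinsupp g).support
    · rw [Finset.sum_eq_single_of_mem _ h h1, Finsupp.single_apply, if_pos (by omega)]
      rfl
    · rw [Finset.sum_eq_zero]
      · have h0 : toFinsupp g (m - k) = 0 := Finsupp.notMem_support_iff.mp h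
        rw [show coeff g (m - k) = toFinsupp g (m - k) from rfl, h0, map_zero, mul_zero]
      · intro j hj
        by_cases hjm : j = m - k
        · exact absurd (hjm ▸ hj) h
        · exact h1 j hj hjm
  · rw [if_neg hkm, Finset.sum_eq_zero]
    intro j hj
    rw [Finsupp.single_apply, if_neg (by omega)]

theorem coeff_mul' (f g : SkewPoly R θ) (m : ℕ) :
    coeff (f * g) m = ∑ i ∈ Finset.range (m + 1), coeff f i * (θ ^ i) (coeff g (m - i)) := by
  induction f using Finsupp.induction_linear with
  | zero =>
    show coeff ((0 : SkewPoly R θ) * g) m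
      = ∑ i ∈ Finset.range (m + 1), coeff (0 : SkewPoly R θ) i * (θ ^ i) (coeff g (m - i))
    rw [zero_mul]
    simp
  | add f f' hf hf' =>
    replace hf : coeff ((ofFinsupp f : SkewPoly R θ) * g) m = ∑ i ∈ Finset.range (m + 1),
        coeff (ofFinsupp f : SkewPoly R θ) i * (θ ^ i) (coeff g (m - i)) := hf
    replace hf' : coeff ((ofFinsupp f' : SkewPoly R θ) * g) m = ∑ i ∈ Finset.range (m + 1),
        coeff (ofFinsupp f' : SkewPoly R θ) i * (θ ^ i) (coeff g (m - i)) := hf'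
    show coeff (((ofFinsupp f : SkewPoly R θ) + (ofFinsupp f' : SkewPoly R θ)) * g) m
      = ∑ i ∈ Finset.range (m + 1),
        coeff ((ofFinsupp f : SkewPoly R θ) + (ofFinsupp f' : SkewPoly R θ)) i * (θ ^ i) (coeff g (m - i))
    rw [add_mul, coeff_add', hf, hf', ← Finset.sum_add_distrib]
    apply Finset.sum_congr rfl
    intro i _
    rw [coeff_add', add_mul]
  | single k a =>
    rw [show ((Finsupp.single k a : ℕ →₀ R) : SkewPoly R θ)
        = ofFinsupp (Finsupp.single k a) from rfl, coeff_single_mul]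
    have : ∀ i ∈ Finset.range (m+1),
        coeff (ofFinsupp (Finsupp.single k a) : SkewPoly R θ) i * (θ ^ i) (coeff g (m - i))
        = if k = i then a * (θ ^ k) (coeff g (m - k)) else 0 := by
      intro i _
      rw [coeff_ofFinsupp, Finsupp.single_apply]
      by_cases h : k = i
      · subst h; simp
      · simp [h]
    rw [Finset.sum_congr rfl this, Finset.sum_ite_eq]
    simp [Nat.lt_succ_iff]

theorem coeff_eq_zero_of_natDegree_lt' {f : SkewPoly R θ} {i : ℕ} (h : natDegree f < i) :
    coeff f i = 0 := by
  by_contra hne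
  have hi : i ∈ (toFinsupp f).support := Finsupp.mem_support_iff.mpr hne
  have hle := Finset.le_max hi
  unfold natDegree degree at h
  cases hmax : (toFinsupp f).support.max with
  | bot => rw [hmax] at hle; exact absurd hle (by simp)
  | coe d =>
    rw [hmax] at hle h
    have : i ≤ d := WithBot.coe_le_coe.mp hle
    simp only [WithBot.unbotD_coe] at h
    omega

theorem coeff_natDegree_ne_zero' {f : SkewPoly R θ} (h : f ≠ 0) :
    coeff f (natDegree f) ≠ 0 := by
  have hne : (toFinsupp f).support.Nonempty := by
    rw [Finsupp.support_nonempty_iff]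
    exact h
  obtain ⟨d, hd⟩ := Finset.max_of_nonempty hne
  have hmem : d ∈ (toFinsupp f).support := Finset.mem_of_max hd
  have : natDegree f = d := by
    unfold natDegree degree
    rw [hd]
    rfl
  rw [this]
  exact Finsupp.mem_support_iff.mp hmem

theorem X_pow' (m : ℕ) : (X θ) ^ m = ofFinsupp (Finsupp.single m 1) := by
  induction m with
  | zero => rfl
  | succ m ih =>
    rw [pow_succ, ih]
    show mulAux θ (Finsupp.single m 1) (Finsupp.single 1 1) = _
    rw [mulAux_single_single]
    simp only [one_mul, map_one]
    rfl

end SkewPoly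

end Aux

namespace SkewPoly

variable {R : Type*} [Ring R] {θ : RingAut R}

theorem coeff_mul_top {f g : SkewPoly R θ} {d r : ℕ}
    (hf : ∀ i, d < i → coeff f i = 0) (hg0 : ∀ i, r < i → coeff g i = 0) :
    coeff (f * g) (d + r) = coeff f d * (θ ^ d) (coeff g r)
      ∧ ∀ j, d + r < j → coeff (f * g) j = 0 := by
  constructor
  · rw [coeff_mul']
    rw [Finset.sum_eq_single d]
    · rw [Nat.add_sub_cancel_left]
    · intro i hi hne
      rcases Nat.lt_or_ge d i with h | h
      · rw [hf i h, zero_mul]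
      · have : r < d + r - i := by omega
        rw [hg0 _ this, map_zero, mul_zero]
    · intro h
      exact absurd (Finset.mem_range.mpr (by omega)) h
  · intro j hj
    rw [coeff_mul', Finset.sum_eq_zero]
    intro i hi
    rcases Nat.lt_or_ge d i with h | h
    · rw [hf i h, zero_mul]
    · have : r < j - i := by omega
      rw [hg0 _ this, map_zero, mul_zero]

theorem div_monic {g : SkewPoly R θ} {r : ℕ} (hg1 : coeff g r = 1)
    (hg0 : ∀ i, r < i → coeff g i = 0) (f : SkewPoly R θ) :
    ∃ q rem : SkewPoly R θ, f = q * g + rem ∧ ∀ i, r ≤ i → coeff rem i = 0 := by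
  suffices H : ∀ N : ℕ, ∀ f : SkewPoly R θ, (∀ i, N ≤ i → coeff f i = 0) →
      ∃ q rem : SkewPoly R θ, f = q * g + rem ∧ ∀ i, r ≤ i → coeff rem i = 0 by
    exact H (natDegree f + 1) f (fun i hi => coeff_eq_zero_of_natDegree_lt' (by omega))
  intro N
  induction N with
  | zero =>
    intro f hf
    have hf0 : f = 0 := ext' fun i => by rw [hf i (Nat.zero_le i)]; rfl
    exact ⟨0, 0, by rw [hf0, zero_mul, add_zero], fun i _ => rfl⟩
  | succ N ih =>
    intro f hf
    by_cases hNr : N < r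
    · exact ⟨0, f, by rw [zero_mul, zero_add], fun i hi => hf i (by omega)⟩
    · push_neg at hNr
      set a := coeff f N with ha
      set s : SkewPoly R θ := ofFinsupp (Finsupp.single (N - r) a) with hs
      have hcoef : ∀ i, N ≤ i → coeff (f - s * g) i = 0 := by
        intro i hi
        rw [coeff_sub', hs, coeff_single_mul, if_pos (by omega : N - r ≤ i)]
        rcases eq_or_lt_of_le hi with h | h
        · rw [← h, show N - (N - r) = r from by omega, hg1, map_one, mul_one, ← ha, sub_self]
        · rw [hf i (by omega), hg0 (i - (N - r)) (by omega), map_zero, mul_zero, sub_zero]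
      obtain ⟨q, rem, he, hrem⟩ := ih (f - s * g) hcoef
      refine ⟨q + s, rem, ?_, hrem⟩
      have : f = q * g + rem + s * g := by
        rw [← he]
        abel
      rw [this, add_mul]
      abel

end SkewPoly

section SumSingle

theorem coeff_sum_single {R : Type*} [Ring R] {θ : RingAut R} {m : ℕ} (v : Fin m → R) (j : ℕ) :
    SkewPoly.coeff (θ := θ)
        (∑ i : Fin m, SkewPoly.ofFinsupp (Finsupp.single (i : ℕ) (v i))) j
      = if h : j < m then v ⟨j, h⟩ else 0 := by
  classical
  have h0 : SkewPoly.coeff (θ := θ)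
      (∑ i : Fin m, SkewPoly.ofFinsupp (Finsupp.single (i : ℕ) (v i))) j
      = ∑ i : Fin m, (Finsupp.single (i : ℕ) (v i)) j := by
    show (∑ i : Fin m, (Finsupp.single (i : ℕ) (v i)) : ℕ →₀ R) j = _
    rw [Finsupp.finset_sum_apply]
  rw [h0]
  by_cases h : j < m
  · rw [dif_pos h, Finset.sum_eq_single (⟨j, h⟩ : Fin m)]
    · rw [Finsupp.single_apply, if_pos rfl]
    · intro i _ hne
      rw [Finsupp.single_apply, if_neg]
      intro hij
      exact hne (Fin.ext hij)
    · intro hmem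
      exact absurd (Finset.mem_univ _) hmem
  · rw [dif_neg h, Finset.sum_eq_zero]
    intro i _
    rw [Finsupp.single_apply, if_neg (by omega : ¬(i : ℕ) = j)]

theorem coeff_sum_monomial {S : Type*} [Semiring S] {m : ℕ} (w : Fin m → S) (j : ℕ) :
    (∑ i : Fin m, Polynomial.monomial (i : ℕ) (w i)).coeff j
      = if h : j < m then w ⟨j, h⟩ else 0 := by
  classical
  rw [Polynomial.finset_sum_coeff]
  by_cases h : j < m
  · rw [dif_pos h, Finset.sum_eq_single (⟨j, h⟩ : Fin m)]
    · rw [Polynomial.coeff_monomial, if_pos rfl]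
    · intro i _ hne
      rw [Polynomial.coeff_monomial, if_neg]
      intro hij
      exact hne (Fin.ext hij)
    · intro hmem
      exact absurd (Finset.mem_univ _) hmem
  · rw [dif_neg h, Finset.sum_eq_zero]
    intro i _
    rw [Polynomial.coeff_monomial, if_neg (by omega : ¬(i : ℕ) = j)]

end SumSingle

section PolyAux

open Polynomial

theorem polyA {F : Type*} [Field F] {d0 h0 g0 : Polynomial F} {n r : ℕ}
    (hn : 0 < n) (hrn : r ≤ n)
    (hg0m : g0.Monic) (hg0d : g0.natDegree = r)
    (hd : Polynomial.degree d0 < ((n - r : ℕ) : WithBot ℕ))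
    (heq : d0 * g0 = h0 * (Polynomial.X ^ n - 1)) : d0 = 0 ∧ h0 = 0 := by
  have hXn : (Polynomial.X ^ n - 1 : Polynomial F) = Polynomial.X ^ n - Polynomial.C 1 := by
    rw [Polynomial.C_1]
  have hXm : (Polynomial.X ^ n - 1 : Polynomial F).Monic := by
    rw [hXn]; exact Polynomial.monic_X_pow_sub_C 1 (by omega)
  have hXd : (Polynomial.X ^ n - 1 : Polynomial F).degree = (n : WithBot ℕ) := by
    rw [hXn]; exact Polynomial.degree_X_pow_sub_C hn 1
  by_cases hd0 : d0 = 0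
  · refine ⟨hd0, ?_⟩
    rw [hd0, zero_mul] at heq
    rcases mul_eq_zero.mp heq.symm with h | h
    · exact h
    · exact absurd h hXm.ne_zero
  · exfalso
    have h0ne : h0 ≠ 0 := by
      intro h
      rw [h, zero_mul] at heq
      rcases mul_eq_zero.mp heq with h' | h'
      · exact hd0 h'
      · exact hg0m.ne_zero h'
    have hL : (d0 * g0).degree < (n : WithBot ℕ) := by
      rw [Polynomial.degree_mul, Polynomial.degree_eq_natDegree hg0m.ne_zero, hg0d]
      calc d0.degree + (r : WithBot ℕ)
          < ((n - r : ℕ) : WithBot ℕ) + (r : WithBot ℕ) :=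
            WithBot.add_lt_add_right (by exact_mod_cast WithBot.coe_ne_bot) hd
        _ = (n : WithBot ℕ) := by
            rw [← Nat.cast_add]
            congr 1
            omega
    have hR : (n : WithBot ℕ) ≤ (h0 * (Polynomial.X ^ n - 1)).degree := by
      rw [Polynomial.degree_mul, hXd]
      exact le_add_of_nonneg_left (Polynomial.zero_le_degree_iff.mpr h0ne)
    rw [heq] at hL
    exact absurd hL (not_lt.mpr hR)

theorem polyB {F : Type*} [Field F] {d1 e h1 g1 bb : Polynomial F} {n r t : ℕ}
    (htr : t < r) (hrn : r ≤ n)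
    (hg1m : g1.Monic) (hg1d : g1.natDegree = r - t)
    (hbbm : bb.Monic) (hbbd : bb.natDegree = n - t)
    (hd : Polynomial.degree d1 < ((n - r : ℕ) : WithBot ℕ))
    (he : Polynomial.degree e < ((r - t : ℕ) : WithBot ℕ))
    (heq : d1 * g1 + e = h1 * bb) : d1 = 0 ∧ e = 0 := by
  have hg1deg : g1.degree = ((r - t : ℕ) : WithBot ℕ) := by
    rw [Polynomial.degree_eq_natDegree hg1m.ne_zero, hg1d]
  have hbbdeg : bb.degree = ((n - t : ℕ) : WithBot ℕ) := by
    rw [Polynomial.degree_eq_natDegree hbbm.ne_zero, hbbd]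
  have hdg : (d1 * g1).degree < ((n - t : ℕ) : WithBot ℕ) := by
    rw [Polynomial.degree_mul, hg1deg]
    calc d1.degree + ((r - t : ℕ) : WithBot ℕ)
        < ((n - r : ℕ) : WithBot ℕ) + ((r - t : ℕ) : WithBot ℕ) :=
          WithBot.add_lt_add_right (by exact_mod_cast WithBot.coe_ne_bot) hd
      _ = ((n - t : ℕ) : WithBot ℕ) := by
          rw [← Nat.cast_add]
          congr 1
          omega
  have h10 : h1 = 0 := by
    by_contra h10
    have hL : (d1 * g1 + e).degree < ((n - t : ℕ) : WithBot ℕ) := by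
      apply lt_of_le_of_lt (Polynomial.degree_add_le _ _)
      apply max_lt hdg
      exact lt_of_lt_of_le he (by exact_mod_cast (by omega : r - t ≤ n - t))
    have hR : ((n - t : ℕ) : WithBot ℕ) ≤ (h1 * bb).degree := by
      rw [Polynomial.degree_mul, hbbdeg]
      exact le_add_of_nonneg_left (Polynomial.zero_le_degree_iff.mpr h10)
    rw [heq] at hL
    exact absurd hL (not_lt.mpr hR)
  rw [h10, zero_mul] at heq
  have hd10 : d1 = 0 := by
    by_contra hd10
    have h1g : d1 * g1 = -e := by linear_combination heq
    have hge : ((r - t : ℕ) : WithBot ℕ) ≤ (d1 * g1).degree := by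
      rw [Polynomial.degree_mul, hg1deg]
      exact le_add_of_nonneg_left (Polynomial.zero_le_degree_iff.mpr hd10)
    rw [h1g, Polynomial.degree_neg] at hge
    exact absurd he (not_lt.mpr hge)
  refine ⟨hd10, ?_⟩
  rw [hd10, zero_mul, zero_add] at heq
  exact heq

end PolyAux

section Phi

/-- skew polynomial with prescribed low coefficients -/
noncomputable def QvFun {R : Type*} [Ring R] (θ : RingAut R) (m : ℕ) (v : Fin m → R) :
    SkewPoly R θ :=
  ∑ i : Fin m, SkewPoly.ofFinsupp (Finsupp.single (i : ℕ) (v i))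

theorem coeff_QvFun {R : Type*} [Ring R] {θ : RingAut R} {m : ℕ} (v : Fin m → R) (j : ℕ) :
    SkewPoly.coeff (QvFun θ m v) j = if h : j < m then v ⟨j, h⟩ else 0 :=
  coeff_sum_single v j

/-- ordinary polynomial with prescribed low coefficients -/
noncomputable def SwFun {S : Type*} [Semiring S] (m : ℕ) (w : Fin m → S) : Polynomial S :=
  ∑ i : Fin m, Polynomial.monomial (i : ℕ) (w i)

theorem coeff_SwFun {S : Type*} [Semiring S] {m : ℕ} (w : Fin m → S) (j : ℕ) :
    (SwFun m w).coeff j = if h : j < m then w ⟨j, h⟩ else 0 :=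
  coeff_sum_monomial w j

end Phi




section DualAux

open SkewPoly

variable {p : ℕ} [Fact p.Prime] {θ : RingAut (DualNumber (ZMod p))}

theorem fst_sum' {ι : Type*} (s : Finset ι) (F : ι → DualNumber (ZMod p)) :
    fst (∑ i ∈ s, F i) = ∑ i ∈ s, fst (F i) := by
  induction s using Finset.cons_induction with
  | empty => simp
  | cons a s ha ih => rw [Finset.sum_cons, Finset.sum_cons, fst_add, ih]

theorem inr_sum' {ι : Type*} (s : Finset ι) (F : ι → ZMod p) :
    (inr (∑ i ∈ s, F i) : DualNumber (ZMod p)) = ∑ i ∈ s, inr (F i) := by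
  induction s using Finset.cons_induction with
  | empty => simp
  | cons a s ha ih => rw [Finset.sum_cons, Finset.sum_cons, inr_add, ih]

theorem inr_mul_fst (m : ZMod p) (y : DualNumber (ZMod p)) :
    (inr m : DualNumber (ZMod p)) * y = inr (m * fst y) := by
  ext
  · simp
  · simp [snd_mul, mul_comm]

theorem mul_inr_fst (m : ZMod p) (y : DualNumber (ZMod p)) :
    y * (inr m : DualNumber (ZMod p)) = inr (fst y * m) := by
  ext
  · simp
  · simp [snd_mul, mul_comm]

theorem theta_inl (a : ZMod p) : θ (inl a : DualNumber (ZMod p)) = inl a := by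
  obtain ⟨k, rfl⟩ := ZMod.natCast_zmod_surjective a
  rw [TrivSqZeroExt.inl_natCast, map_natCast]

theorem fst_theta_inr (m : ZMod p) : fst (θ (inr m : DualNumber (ZMod p))) = 0 := by
  have h : θ (inr m) * θ (inr m) = 0 := by
    rw [← map_mul, inr_mul_inr, map_zero]
  have := congrArg fst h
  rw [fst_mul, fst_zero] at this
  exact mul_self_eq_zero.mp this

theorem theta_inr_eq (m : ZMod p) :
    θ (inr m : DualNumber (ZMod p)) = inr (snd (θ (inr m : DualNumber (ZMod p)))) := by
  ext
  · rw [fst_theta_inr, fst_inr]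
  · rw [snd_inr]

/-- The unit `c` with `θ(ε) = c ε`. -/
noncomputable def epsC (θ : RingAut (DualNumber (ZMod p))) : ZMod p :=
  snd (θ (DualNumber.eps))

theorem theta_eps : θ (DualNumber.eps) = inr (epsC θ) := by
  rw [show (DualNumber.eps : DualNumber (ZMod p)) = inr 1 from rfl]
  exact theta_inr_eq 1

theorem epsC_ne_zero : epsC θ ≠ 0 := by
  intro h
  have h2 : θ (DualNumber.eps) = 0 := by rw [theta_eps, h, inr_zero]
  have h3 : (DualNumber.eps : DualNumber (ZMod p)) = 0 := by
    have := θ.injective (a₁ := DualNumber.eps) (a₂ := 0)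
    exact this (by rw [h2, map_zero])
  have := congrArg snd h3
  rw [DualNumber.snd_eps, snd_zero] at this
  exact one_ne_zero this

theorem theta_pow_inl (i : ℕ) (a : ZMod p) :
    (θ ^ i) (inl a : DualNumber (ZMod p)) = inl a := by
  induction i with
  | zero => rfl
  | succ i ih =>
    rw [pow_succ']
    show θ ((θ ^ i) (inl a : DualNumber (ZMod p))) = inl a
    rw [ih, theta_inl]

theorem theta_inr_val (x : ZMod p) :
    θ (inr x : DualNumber (ZMod p)) = inr (x * epsC θ) := by
  have h : (inr x : DualNumber (ZMod p)) = inl x * DualNumber.eps := by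
    rw [show (DualNumber.eps : DualNumber (ZMod p)) = inr 1 from rfl, inl_mul_inr,
      smul_eq_mul, mul_one]
  rw [h, map_mul, theta_inl, theta_eps, inl_mul_inr, smul_eq_mul]

theorem theta_pow_inr (i : ℕ) (x : ZMod p) :
    (θ ^ i) (inr x : DualNumber (ZMod p)) = inr (x * epsC θ ^ i) := by
  induction i with
  | zero => simp [RingAut.one_apply']
  | succ i ih =>
    rw [pow_succ']
    show θ ((θ ^ i) (inr x : DualNumber (ZMod p))) = _
    rw [ih, theta_inr_val, mul_assoc, ← pow_succ]

theorem fst_theta_pow (i : ℕ) (y : DualNumber (ZMod p)) :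
    fst ((θ ^ i) y) = fst y := by
  have hy : y = inl (fst y) + inr (snd y) := (inl_fst_add_inr_snd_eq y).symm
  conv_lhs => rw [hy]
  rw [map_add, fst_add, theta_pow_inl, theta_pow_inr, fst_inl, fst_inr, add_zero]

/-- `u·s(x)` as a skew polynomial over the dual numbers. -/
noncomputable def epsPoly {p : ℕ} (θ : RingAut (DualNumber (ZMod p)))
    (s : Polynomial (ZMod p)) : SkewPoly (DualNumber (ZMod p)) θ :=
  SkewPoly.C θ DualNumber.eps * SkewPoly.ofPoly θ s

theorem coeff_ofPoly (s : Polynomial (ZMod p)) (i : ℕ) :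
    SkewPoly.coeff (SkewPoly.ofPoly θ s) i = inl (s.coeff i) := by
  show (Finsupp.mapRange inl (inl_zero (ZMod p)) s.toFinsupp.coeff) i = inl (s.coeff i)
  rw [Finsupp.mapRange_apply, Polynomial.toFinsupp_apply]

theorem coeff_fstPoly (f : SkewPoly (DualNumber (ZMod p)) θ) (i : ℕ) :
    (SkewPoly.fstPoly f).coeff i = fst (SkewPoly.coeff f i) := by
  show (⟨AddMonoidAlgebra.ofCoeff (Finsupp.mapRange fst fst_zero (SkewPoly.toFinsupp f))⟩ : Polynomial (ZMod p)).coeff i = _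
  rw [Polynomial.coeff_ofFinsupp, AddMonoidAlgebra.coeff_ofCoeff, Finsupp.mapRange_apply]
  rfl

theorem coeff_epsPoly (s : Polynomial (ZMod p)) (m : ℕ) :
    SkewPoly.coeff (epsPoly θ s) m = inr (s.coeff m) := by
  unfold epsPoly
  rw [show SkewPoly.C θ (DualNumber.eps)
      = (SkewPoly.ofFinsupp (Finsupp.single 0 DualNumber.eps) : SkewPoly (DualNumber (ZMod p)) θ)
      from rfl,
    SkewPoly.coeff_single_mul]
  rw [if_pos (Nat.zero_le m), pow_zero, RingAut.one_apply', Nat.sub_zero, coeff_ofPoly]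
  rw [show (DualNumber.eps : DualNumber (ZMod p)) = inr 1 from rfl, inr_mul_fst, fst_inl, one_mul]

theorem epsPoly_add (s u : Polynomial (ZMod p)) :
    epsPoly θ (s + u) = epsPoly θ s + epsPoly θ u := by
  apply SkewPoly.ext'
  intro i
  rw [SkewPoly.coeff_add', coeff_epsPoly, coeff_epsPoly, coeff_epsPoly, Polynomial.coeff_add,
    inr_add]

theorem epsPoly_sub (s u : Polynomial (ZMod p)) :
    epsPoly θ (s - u) = epsPoly θ s - epsPoly θ u := by
  apply SkewPoly.ext'
  intro i
  rw [SkewPoly.coeff_sub', coeff_epsPoly, coeff_epsPoly, coeff_epsPoly, Polynomial.coeff_sub]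
  ext
  · rw [fst_inr, fst_sub, fst_inr, fst_inr, sub_zero]
  · rw [snd_inr, snd_sub, snd_inr, snd_inr]

theorem epsPoly_inj {s u : Polynomial (ZMod p)} (h : epsPoly θ s = epsPoly θ u) : s = u := by
  apply Polynomial.ext
  intro i
  have := congrArg (fun f => SkewPoly.coeff f i) h
  simp only [coeff_epsPoly] at this
  exact inr_injective this

theorem epsPoly_mul (s : Polynomial (ZMod p)) (f : SkewPoly (DualNumber (ZMod p)) θ) :
    epsPoly θ s * f = epsPoly θ (s * SkewPoly.fstPoly f) := by
  apply SkewPoly.ext'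
  intro m
  rw [SkewPoly.coeff_mul', coeff_epsPoly]
  have h1 : ∀ i ∈ Finset.range (m + 1),
      SkewPoly.coeff (epsPoly θ s) i * (θ ^ i) (SkewPoly.coeff f (m - i))
        = inr (s.coeff i * (SkewPoly.fstPoly f).coeff (m - i)) := by
    intro i _
    rw [coeff_epsPoly, inr_mul_fst, fst_theta_pow, coeff_fstPoly]
  rw [Finset.sum_congr rfl h1, ← inr_sum']
  congr 1
  rw [Polynomial.coeff_mul, Finset.Nat.sum_antidiagonal_eq_sum_range_succ_mk]

theorem fstPoly_mul (f g : SkewPoly (DualNumber (ZMod p)) θ) :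
    SkewPoly.fstPoly (f * g) = SkewPoly.fstPoly f * SkewPoly.fstPoly g := by
  apply Polynomial.ext
  intro m
  rw [coeff_fstPoly, SkewPoly.coeff_mul', fst_sum', Polynomial.coeff_mul,
    Finset.Nat.sum_antidiagonal_eq_sum_range_succ_mk]
  apply Finset.sum_congr rfl
  intro i _
  rw [fst_mul, fst_theta_pow, coeff_fstPoly, coeff_fstPoly]

theorem fstPoly_add (f g : SkewPoly (DualNumber (ZMod p)) θ) :
    SkewPoly.fstPoly (f + g) = SkewPoly.fstPoly f + SkewPoly.fstPoly g := by
  apply Polynomial.ext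
  intro m
  rw [Polynomial.coeff_add, coeff_fstPoly, coeff_fstPoly, coeff_fstPoly, SkewPoly.coeff_add',
    fst_add]

theorem fstPoly_epsPoly (s : Polynomial (ZMod p)) :
    SkewPoly.fstPoly (epsPoly θ s) = 0 := by
  apply Polynomial.ext
  intro m
  rw [coeff_fstPoly, coeff_epsPoly, fst_inr, Polynomial.coeff_zero]

/-- `x^j` coefficients as 2nd component. -/
noncomputable def sndPoly {p : ℕ} {θ : RingAut (DualNumber (ZMod p))}
    (f : SkewPoly (DualNumber (ZMod p)) θ) : Polynomial (ZMod p) :=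
  Polynomial.ofFinsupp (AddMonoidAlgebra.ofCoeff (Finsupp.mapRange snd snd_zero (SkewPoly.toFinsupp f)))

theorem coeff_sndPoly (f : SkewPoly (DualNumber (ZMod p)) θ) (i : ℕ) :
    (sndPoly f).coeff i = snd (SkewPoly.coeff f i) := by
  show (⟨AddMonoidAlgebra.ofCoeff (Finsupp.mapRange snd snd_zero (SkewPoly.toFinsupp f))⟩ : Polynomial (ZMod p)).coeff i = _
  rw [Polynomial.coeff_ofFinsupp, AddMonoidAlgebra.coeff_ofCoeff, Finsupp.mapRange_apply]
  rfl

theorem eq_epsPoly_of_fst_eq_zero {f : SkewPoly (DualNumber (ZMod p)) θ}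
    (h : SkewPoly.fstPoly f = 0) : f = epsPoly θ (sndPoly f) := by
  apply SkewPoly.ext'
  intro i
  rw [coeff_epsPoly, coeff_sndPoly]
  have hf : fst (SkewPoly.coeff f i) = 0 := by
    have := congrArg (fun q => Polynomial.coeff q i) h
    simpa [coeff_fstPoly] using this
  ext
  · rw [hf, fst_inr]
  · rw [snd_inr]

theorem single_mul_epsPoly (i : ℕ) (b : DualNumber (ZMod p)) (s : Polynomial (ZMod p)) :
    (SkewPoly.ofFinsupp (Finsupp.single i b) : SkewPoly (DualNumber (ZMod p)) θ) * epsPoly θ s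
      = epsPoly θ (Polynomial.monomial i (fst b * epsC θ ^ i) * s) := by
  apply SkewPoly.ext'
  intro m
  rw [SkewPoly.coeff_single_mul, coeff_epsPoly, coeff_epsPoly,
    mul_comm (Polynomial.monomial i (fst b * epsC θ ^ i)) s,
    ← Polynomial.C_mul_X_pow_eq_monomial, ← mul_assoc, Polynomial.coeff_mul_X_pow',
    Polynomial.coeff_mul_C]
  by_cases h : i ≤ m
  · rw [if_pos h, if_pos h, theta_pow_inr, mul_inr_fst]
    congr 1
    ring
  · rw [if_neg h, if_neg h, inr_zero]

theorem mul_epsPoly (f : SkewPoly (DualNumber (ZMod p)) θ) (s : Polynomial (ZMod p)) :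
    ∃ m : Polynomial (ZMod p), f * epsPoly θ s = epsPoly θ (m * s) := by
  induction f using Finsupp.induction_linear with
  | zero =>
    refine ⟨0, ?_⟩
    show (0 : SkewPoly (DualNumber (ZMod p)) θ) * epsPoly θ s = epsPoly θ (0 * s)
    rw [zero_mul, zero_mul]
    apply SkewPoly.ext'
    intro i
    rw [coeff_epsPoly, Polynomial.coeff_zero, inr_zero, SkewPoly.coeff_zero']
  | add f f' hf hf' =>
    obtain ⟨m1, h1⟩ := hf
    obtain ⟨m2, h2⟩ := hf'
    exact ⟨m1 + m2, by
      replace h1 : (SkewPoly.ofFinsupp f : SkewPoly (DualNumber (ZMod p)) θ) * epsPoly θ s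
        = epsPoly θ (m1 * s) := h1
      replace h2 : (SkewPoly.ofFinsupp f' : SkewPoly (DualNumber (ZMod p)) θ) * epsPoly θ s
        = epsPoly θ (m2 * s) := h2
      show ((SkewPoly.ofFinsupp f : SkewPoly (DualNumber (ZMod p)) θ)
        + (SkewPoly.ofFinsupp f' : SkewPoly (DualNumber (ZMod p)) θ))
        * epsPoly θ s = _
      rw [add_mul, h1, h2, add_mul, epsPoly_add]⟩
  | single i b =>
    exact ⟨Polynomial.monomial i (fst b * epsC θ ^ i), single_mul_epsPoly i b s⟩

theorem exists_mul_epsPoly (s a : Polynomial (ZMod p)) :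
    ∃ y : SkewPoly (DualNumber (ZMod p)) θ, y * epsPoly θ a = epsPoly θ (s * a) := by
  induction s using Polynomial.induction_on' with
  | add q w hq hw =>
    obtain ⟨y1, h1⟩ := hq
    obtain ⟨y2, h2⟩ := hw
    exact ⟨y1 + y2, by rw [add_mul, h1, h2, add_mul, epsPoly_add]⟩
  | monomial i a' =>
    refine ⟨SkewPoly.ofFinsupp (Finsupp.single i (inl (a' * (epsC θ ^ i)⁻¹))), ?_⟩
    rw [single_mul_epsPoly, fst_inl]
    congr 3
    rw [mul_assoc, inv_mul_cancel₀ (pow_ne_zero _ (epsC_ne_zero (θ := θ))), mul_one]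

theorem coeff_X_pow_sub_one' {R : Type*} [Ring R] {θ' : RingAut R} (n j : ℕ) :
    SkewPoly.coeff ((SkewPoly.X θ') ^ n - 1) j
      = (if n = j then (1 : R) else 0) - (if 0 = j then 1 else 0) := by
  rw [SkewPoly.coeff_sub', SkewPoly.X_pow']
  rw [show (1 : SkewPoly R θ') = SkewPoly.ofFinsupp (Finsupp.single 0 1) from rfl]
  rw [SkewPoly.coeff_ofFinsupp, SkewPoly.coeff_ofFinsupp, Finsupp.single_apply,
    Finsupp.single_apply]

theorem fstPoly_X_pow_sub_one (n : ℕ) :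
    SkewPoly.fstPoly ((SkewPoly.X θ) ^ n - 1 : SkewPoly (DualNumber (ZMod p)) θ)
      = Polynomial.X ^ n - 1 := by
  apply Polynomial.ext
  intro j
  have e1 : ((Polynomial.X : Polynomial (ZMod p)) ^ n).coeff j = if n = j then 1 else 0 := by
    rw [Polynomial.coeff_X_pow]; exact if_congr eq_comm rfl rfl
  have e2 : (1 : Polynomial (ZMod p)).coeff j = if 0 = j then 1 else 0 := by
    rw [Polynomial.coeff_one]; exact if_congr eq_comm rfl rfl
  rw [coeff_fstPoly, coeff_X_pow_sub_one', Polynomial.coeff_sub, e1, e2, fst_sub]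
  simp [apply_ite fst]

end DualAux

section EpsZero

variable {p : ℕ} [Fact p.Prime] {θ : RingAut (DualNumber (ZMod p))}

theorem epsPoly_zero : epsPoly θ (0 : Polynomial (ZMod p)) = 0 := by
  apply SkewPoly.ext'
  intro i
  rw [coeff_epsPoly, Polynomial.coeff_zero, inr_zero, SkewPoly.coeff_zero']

end EpsZero



set_option maxHeartbeats 4000000 in
open SkewPoly DualNumber in
/-- For the code `C = ⟨g(x) + u p(x), u ā(x)⟩`, with `g` monic of degree `r`,
`ā ∈ F_p[x]` monic of degree `t < r`, `xⁿ-1 = k∗g` in `R[x;θ]`,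
`ā ∣ xⁿ-1` in `F_p[x]`, `ā ∣ (g mod u)`, and `((xⁿ-1)/g)·u p(x) ∈ ⟨u ā⟩`,
one has `|C| = p^{2(n-r)} · p^{r-t}`. -/
theorem skew_code_mixed_cardinality (p : ℕ) (hp : p.Prime) (hodd : p ≠ 2)
    (θ : RingAut (DualNumber (ZMod p))) (n : ℕ) (hn : 0 < n)
    (g : SkewPoly (DualNumber (ZMod p)) θ) (hg : SkewPoly.Monic g)
    (r : ℕ) (hr : SkewPoly.natDegree g = r) (hrn : r ≤ n)
    (pp : Polynomial (ZMod p))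
    (abar : Polynomial (ZMod p)) (habar : abar.Monic) (t : ℕ)
    (ht : abar.natDegree = t) (htr : t < r)
    (hk : ∃ k : SkewPoly (DualNumber (ZMod p)) θ, SkewPoly.X θ ^ n - 1 = k * g)
    (hdvd : abar ∣ (Polynomial.X ^ n - 1 : Polynomial (ZMod p)))
    (hdvdg : abar ∣ SkewPoly.fstPoly g)
    (hquot : ∀ k : SkewPoly (DualNumber (ZMod p)) θ, SkewPoly.X θ ^ n - 1 = k * g →
      (Ideal.span {SkewPoly.X θ ^ n - 1}).mkQ (k * (SkewPoly.C θ ε * SkewPoly.ofPoly θ pp)) ∈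
        Submodule.span (SkewPoly (DualNumber (ZMod p)) θ)
          {(Ideal.span {SkewPoly.X θ ^ n - 1}).mkQ (SkewPoly.C θ ε * SkewPoly.ofPoly θ abar)})
    (Code : Submodule (SkewPoly (DualNumber (ZMod p)) θ)
      (SkewPoly (DualNumber (ZMod p)) θ ⧸ Ideal.span {SkewPoly.X θ ^ n - 1}))
    (hCode : Code = Submodule.span (SkewPoly (DualNumber (ZMod p)) θ)
      {(Ideal.span {SkewPoly.X θ ^ n - 1}).mkQ (g + SkewPoly.C θ ε * SkewPoly.ofPoly θ pp),
       (Ideal.span {SkewPoly.X θ ^ n - 1}).mkQ (SkewPoly.C θ ε * SkewPoly.ofPoly θ abar)}) :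
    Nat.card Code = p ^ (2 * (n - r)) * p ^ (r - t) := by
  classical
  haveI : Fact p.Prime := ⟨hp⟩
  subst hCode
  have hepsdef : ∀ s : Polynomial (ZMod p),
      SkewPoly.C θ DualNumber.eps * SkewPoly.ofPoly θ s = epsPoly θ s := fun _ => rfl
  simp only [hepsdef] at hquot ⊢
  set W : SkewPoly (DualNumber (ZMod p)) θ := SkewPoly.X θ ^ n - 1 with hWdef
  obtain ⟨k, hkeq⟩ := hk
  set S := Submodule.span (SkewPoly (DualNumber (ZMod p)) θ)
    {(Ideal.span {W}).mkQ (g + epsPoly θ pp), (Ideal.span {W}).mkQ (epsPoly θ abar)} with hSdef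
  -- basic facts
  have hone : (1 : DualNumber (ZMod p)) ≠ 0 := by
    intro h
    have := congrArg fst h
    rw [fst_one, fst_zero] at this
    exact one_ne_zero this
  have hgr : SkewPoly.coeff g r = 1 := by
    have h1 : SkewPoly.coeff g (SkewPoly.natDegree g) = 1 := hg
    rwa [hr] at h1
  have hgtop : ∀ i, r < i → SkewPoly.coeff g i = 0 := fun i hi =>
    SkewPoly.coeff_eq_zero_of_natDegree_lt' (by rw [hr]; exact hi)
  have hwtop : ∀ j, n < j → SkewPoly.coeff W j = 0 := by
    intro j hj
    rw [hWdef, coeff_X_pow_sub_one', if_neg (by omega), if_neg (by omega), sub_zero]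
  have hwn : SkewPoly.coeff W n = 1 := by
    rw [hWdef, coeff_X_pow_sub_one', if_pos rfl, if_neg (by omega), sub_zero]
  have hk0 : k ≠ 0 := by
    intro h0
    rw [h0, zero_mul] at hkeq
    have h1 := congrArg (fun f => SkewPoly.coeff f 0) hkeq
    simp only [SkewPoly.coeff_zero'] at h1
    rw [hWdef, coeff_X_pow_sub_one', if_neg (by omega), if_pos rfl, zero_sub, neg_eq_zero] at h1
    exact hone h1
  have hknd : SkewPoly.natDegree k ≤ n - r := by
    by_contra hcon
    push_neg at hcon
    have htop := (SkewPoly.coeff_mul_top (f := k) (g := g) (d := SkewPoly.natDegree k) (r := r)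
      (fun i hi => SkewPoly.coeff_eq_zero_of_natDegree_lt' hi) hgtop).1
    rw [hgr, map_one, mul_one, ← hkeq] at htop
    rw [hwtop _ (by omega)] at htop
    exact SkewPoly.coeff_natDegree_ne_zero' hk0 htop.symm
  have hktopc : ∀ i, n - r < i → SkewPoly.coeff k i = 0 := fun i hi =>
    SkewPoly.coeff_eq_zero_of_natDegree_lt' (by omega)
  have hknr : SkewPoly.coeff k (n - r) = 1 := by
    have htop := (SkewPoly.coeff_mul_top (f := k) (g := g) (d := n - r) (r := r) hktopc hgtop).1
    rw [hgr, map_one, mul_one, ← hkeq, show n - r + r = n from by omega, hwn] at htop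
    exact htop.symm
  -- reductions mod u
  have hfstG : SkewPoly.fstPoly (g + epsPoly θ pp) = SkewPoly.fstPoly g := by
    rw [fstPoly_add, fstPoly_epsPoly, add_zero]
  have hg0c : (SkewPoly.fstPoly g).coeff r = 1 := by
    rw [coeff_fstPoly, hgr, fst_one]
  have hg0top : ∀ i, r < i → (SkewPoly.fstPoly g).coeff i = 0 := fun i hi => by
    rw [coeff_fstPoly, hgtop i hi, fst_zero]
  have hg0nd : (SkewPoly.fstPoly g).natDegree = r := by
    have hle : (SkewPoly.fstPoly g).natDegree ≤ r :=
      Polynomial.natDegree_le_iff_coeff_eq_zero.mpr hg0top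
    have hge : r ≤ (SkewPoly.fstPoly g).natDegree :=
      Polynomial.le_natDegree_of_ne_zero (by rw [hg0c]; exact one_ne_zero)
    omega
  have hg0m : (SkewPoly.fstPoly g).Monic :=
    Polynomial.monic_of_natDegree_le_of_coeff_eq_one r hg0nd.le hg0c
  -- factorizations in F_p[x]
  obtain ⟨bb, hbb⟩ := hdvd
  obtain ⟨g1, hgfact⟩ := hdvdg
  have hXnm : (Polynomial.X ^ n - 1 : Polynomial (ZMod p)).Monic := by
    have h := Polynomial.monic_X_pow_sub_C (1 : ZMod p) (by omega : n ≠ 0)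
    rwa [Polynomial.C_1] at h
  have hXnd : (Polynomial.X ^ n - 1 : Polynomial (ZMod p)).natDegree = n := by
    have h := Polynomial.natDegree_X_pow_sub_C (n := n) (r := (1 : ZMod p))
    rwa [Polynomial.C_1] at h
  have hbbm : bb.Monic := habar.of_mul_monic_left (by rw [← hbb]; exact hXnm)
  have hbbnd : bb.natDegree = n - t := by
    have h1 : (abar * bb).natDegree = abar.natDegree + bb.natDegree := habar.natDegree_mul hbbm
    rw [← hbb, hXnd, ht] at h1
    omega
  have hg1m : g1.Monic := habar.of_mul_monic_left (by rw [← hgfact]; exact hg0m)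
  have hg1nd : g1.natDegree = r - t := by
    have h1 : (abar * g1).natDegree = abar.natDegree + g1.natDegree := habar.natDegree_mul hg1m
    rw [← hgfact, hg0nd, ht] at h1
    omega
  have hg1deg : g1.degree = ((r - t : ℕ) : WithBot ℕ) := by
    rw [Polynomial.degree_eq_natDegree hg1m.ne_zero, hg1nd]
  have hbbdeg : bb.degree = ((n - t : ℕ) : WithBot ℕ) := by
    rw [Polynomial.degree_eq_natDegree hbbm.ne_zero, hbbnd]
  -- kernel facts
  have hker : ∀ z : SkewPoly (DualNumber (ZMod p)) θ, (Ideal.span {W}).mkQ (z * W) = 0 := by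
    intro z
    rw [Submodule.mkQ_apply, Submodule.Quotient.mk_eq_zero]
    exact Submodule.mem_span_singleton.mpr ⟨z, rfl⟩
  -- membership of canonical forms
  have hmem : ∀ (v : Fin (n - r) → DualNumber (ZMod p)) (w : Fin (r - t) → ZMod p),
      (Ideal.span {W}).mkQ (QvFun θ (n - r) v * (g + epsPoly θ pp)
        + epsPoly θ (SwFun (r - t) w * abar)) ∈ S := by
    intro v w
    rw [hSdef, Submodule.mem_span_pair]
    obtain ⟨y, hy⟩ := exists_mul_epsPoly (θ := θ) (SwFun (r - t) w) abar
    refine ⟨QvFun θ (n - r) v, y, ?_⟩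
    rw [← map_smul, ← map_smul, ← map_add, smul_eq_mul, smul_eq_mul, hy]
  -- injectivity at the level of representatives
  have hinj0 : ∀ (v v' : Fin (n - r) → DualNumber (ZMod p)) (w w' : Fin (r - t) → ZMod p),
      (Ideal.span {W}).mkQ (QvFun θ (n - r) v * (g + epsPoly θ pp)
          + epsPoly θ (SwFun (r - t) w * abar))
        = (Ideal.span {W}).mkQ (QvFun θ (n - r) v' * (g + epsPoly θ pp)
          + epsPoly θ (SwFun (r - t) w' * abar)) → v = v' ∧ w = w' := by
    intro v v' w w' hEq
    rw [Submodule.mkQ_apply, Submodule.mkQ_apply, Submodule.Quotient.eq] at hEq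
    obtain ⟨h, hh⟩ := Submodule.mem_span_singleton.mp hEq
    rw [smul_eq_mul] at hh
    have hmain : (QvFun θ (n - r) v - QvFun θ (n - r) v') * (g + epsPoly θ pp)
        + epsPoly θ ((SwFun (r - t) w - SwFun (r - t) w') * abar) = h * W := by
      rw [sub_mul (QvFun θ (n - r) v) (QvFun θ (n - r) v') (g + epsPoly θ pp),
        sub_mul (SwFun (r - t) w) (SwFun (r - t) w') abar, epsPoly_sub, hh]
      abel
    have hdcoeff : ∀ i, n - r ≤ i →
        SkewPoly.coeff (QvFun θ (n - r) v - QvFun θ (n - r) v') i = 0 := by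
      intro i hi
      rw [SkewPoly.coeff_sub', coeff_QvFun, coeff_QvFun, dif_neg (by omega), dif_neg (by omega),
        sub_self]
    have hfst := congrArg SkewPoly.fstPoly hmain
    rw [fstPoly_add, fstPoly_mul, fstPoly_epsPoly, add_zero, fstPoly_mul, hfstG, hWdef,
      fstPoly_X_pow_sub_one] at hfst
    have hd0deg : Polynomial.degree
        (SkewPoly.fstPoly (QvFun θ (n - r) v - QvFun θ (n - r) v'))
          < ((n - r : ℕ) : WithBot ℕ) := by
      rw [Polynomial.degree_lt_iff_coeff_zero]
      intro m hm
      rw [coeff_fstPoly, hdcoeff m hm, fst_zero]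
    obtain ⟨hd0, hh0⟩ := polyA hn hrn hg0m hg0nd hd0deg hfst
    have hdeps := eq_epsPoly_of_fst_eq_zero (θ := θ) hd0
    have hheps := eq_epsPoly_of_fst_eq_zero (θ := θ) hh0
    rw [hdeps, hheps, epsPoly_mul, epsPoly_mul, hfstG, hWdef, fstPoly_X_pow_sub_one,
      ← epsPoly_add] at hmain
    have hpoly := epsPoly_inj hmain
    rw [hgfact, hbb] at hpoly
    have hcancel : sndPoly (QvFun θ (n - r) v - QvFun θ (n - r) v') * g1
        + (SwFun (r - t) w - SwFun (r - t) w') = sndPoly h * bb := by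
      apply mul_left_cancel₀ habar.ne_zero
      linear_combination hpoly
    have hd1deg : (sndPoly (QvFun θ (n - r) v - QvFun θ (n - r) v')).degree
        < ((n - r : ℕ) : WithBot ℕ) := by
      rw [Polynomial.degree_lt_iff_coeff_zero]
      intro m hm
      rw [coeff_sndPoly, hdcoeff m hm, snd_zero]
    have hedeg : (SwFun (r - t) w - SwFun (r - t) w').degree
        < ((r - t : ℕ) : WithBot ℕ) := by
      rw [Polynomial.degree_lt_iff_coeff_zero]
      intro m hm
      rw [Polynomial.coeff_sub, coeff_SwFun, coeff_SwFun, dif_neg (by omega), dif_neg (by omega),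
        sub_self]
    obtain ⟨hd1z, hez⟩ := polyB htr hrn hg1m hg1nd hbbm hbbnd hd1deg hedeg hcancel
    have hdzero : QvFun θ (n - r) v - QvFun θ (n - r) v' = 0 := by
      rw [hdeps, hd1z, epsPoly_zero]
    constructor
    · funext i
      have h0 := congrArg (fun f => SkewPoly.coeff f (i : ℕ)) hdzero
      simp only [SkewPoly.coeff_sub', SkewPoly.coeff_zero'] at h0
      rw [coeff_QvFun, coeff_QvFun, dif_pos i.isLt, dif_pos i.isLt] at h0
      simpa [sub_eq_zero] using h0
    · funext i
      have h0 := congrArg (fun f => Polynomial.coeff f (i : ℕ)) hez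
      simp only [Polynomial.coeff_sub, Polynomial.coeff_zero] at h0
      rw [coeff_SwFun, coeff_SwFun, dif_pos i.isLt, dif_pos i.isLt] at h0
      simpa [sub_eq_zero] using h0
  -- the bijection
  let Φ : ((Fin (n - r) → DualNumber (ZMod p)) × (Fin (r - t) → ZMod p)) → ↥S :=
    fun vw => ⟨(Ideal.span {W}).mkQ (QvFun θ (n - r) vw.1 * (g + epsPoly θ pp)
      + epsPoly θ (SwFun (r - t) vw.2 * abar)), hmem vw.1 vw.2⟩
  have hΦinj : Function.Injective Φ := by
    intro x y hxy
    have h0 := congrArg Subtype.val hxy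
    obtain ⟨hv, hw⟩ := hinj0 x.1 y.1 x.2 y.2 h0
    exact Prod.ext hv hw
  have hΦsurj : Function.Surjective Φ := by
    rintro ⟨x, hxS⟩
    rw [hSdef, Submodule.mem_span_pair] at hxS
    obtain ⟨a, b, hx⟩ := hxS
    -- reduce a * G + b * A to canonical form
    obtain ⟨m1, hbA⟩ := mul_epsPoly (θ := θ) b abar
    obtain ⟨q, a', hdiv, ha'⟩ := SkewPoly.div_monic hknr hktopc a
    obtain ⟨y, hy⟩ := Submodule.mem_span_singleton.mp (hquot k hkeq)
    have hy' : (Ideal.span {W}).mkQ (y * epsPoly θ abar)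
        = (Ideal.span {W}).mkQ (k * epsPoly θ pp) := by
      rw [← hy, ← map_smul, smul_eq_mul]
    rw [Submodule.mkQ_apply, Submodule.mkQ_apply, Submodule.Quotient.eq] at hy'
    obtain ⟨h2, hh2⟩ := Submodule.mem_span_singleton.mp hy'
    rw [smul_eq_mul] at hh2
    obtain ⟨m2, hym⟩ := mul_epsPoly (θ := θ) y abar
    have hepspp : k * epsPoly θ pp = epsPoly θ (m2 * abar) - h2 * W := by
      rw [← hym, hh2]
      abel
    obtain ⟨m3, hm3⟩ := mul_epsPoly (θ := θ) q (m2 * abar)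
    set M : Polynomial (ZMod p) := m3 * m2 + m1 with hM
    set s1 : Polynomial (ZMod p) := M %ₘ bb with hs1
    set w2 : Polynomial (ZMod p) := M /ₘ bb with hw2
    set s : Polynomial (ZMod p) := s1 %ₘ g1 with hs
    set w3 : Polynomial (ZMod p) := s1 /ₘ g1 with hw3
    have hs1deg : s1.degree < ((n - t : ℕ) : WithBot ℕ) := by
      rw [← hbbdeg, hs1]
      exact Polynomial.degree_modByMonic_lt M hbbm
    have hw3c : ∀ j, n - r ≤ j → w3.coeff j = 0 := by
      intro j hj
      by_cases hlow : s1.degree < g1.degree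
      · rw [hw3, (Polynomial.divByMonic_eq_zero_iff hg1m).mpr hlow, Polynomial.coeff_zero]
      · push_neg at hlow
        have h0 : s1 ≠ 0 := by
          intro h
          rw [h, Polynomial.degree_zero, le_bot_iff, Polynomial.degree_eq_bot] at hlow
          exact hg1m.ne_zero hlow
        have hrt : r - t ≤ s1.natDegree := by
          have h1 := Polynomial.natDegree_le_natDegree hlow
          omega
        apply Polynomial.coeff_eq_zero_of_natDegree_lt
        rw [hw3, Polynomial.natDegree_divByMonic s1 hg1m, hg1nd]
        have hlt : s1.natDegree < n - t := by
          rw [Polynomial.natDegree_lt_iff_degree_lt h0]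
          exact hs1deg
        omega
    have hsdeg : s.degree < ((r - t : ℕ) : WithBot ℕ) := by
      rw [← hg1deg, hs]
      exact Polynomial.degree_modByMonic_lt s1 hg1m
    have hscoeff : ∀ j, r - t ≤ j → s.coeff j = 0 := fun j hj =>
      Polynomial.coeff_eq_zero_of_degree_lt
        (lt_of_lt_of_le hsdeg (by exact_mod_cast hj))
    have hMeq : M * abar = s * abar + w3 * SkewPoly.fstPoly g + w2 * (Polynomial.X ^ n - 1) := by
      have h1eq : s1 + bb * w2 = M := by
        rw [hs1, hw2]
        exact Polynomial.modByMonic_add_div M bb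
      have h2eq : s + g1 * w3 = s1 := by
        rw [hs, hw3]
        exact Polynomial.modByMonic_add_div s1 g1
      rw [hgfact, hbb]
      calc M * abar = (s1 + bb * w2) * abar := by rw [h1eq]
        _ = (s + g1 * w3) * abar + w2 * (abar * bb) := by rw [h2eq]; ring
        _ = s * abar + w3 * (abar * g1) + w2 * (abar * bb) := by ring
    have e2 : epsPoly θ (M * abar)
        = epsPoly θ (s * abar) + epsPoly θ w3 * (g + epsPoly θ pp) + epsPoly θ w2 * W := by
      rw [epsPoly_mul w3, epsPoly_mul w2, hfstG, hWdef, fstPoly_X_pow_sub_one,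
        ← epsPoly_add, ← epsPoly_add, hMeq]
    have hMsplit : epsPoly θ (M * abar)
        = epsPoly θ (m3 * (m2 * abar)) + epsPoly θ (m1 * abar) := by
      rw [← epsPoly_add]
      congr 1
      rw [hM]
      ring
    have ebig : a * (g + epsPoly θ pp) + b * epsPoly θ abar
        = (a' + epsPoly θ w3) * (g + epsPoly θ pp) + epsPoly θ (s * abar)
          + (q * W + epsPoly θ w2 * W - q * (h2 * W)) := by
      have hkG : k * (g + epsPoly θ pp) = W + (epsPoly θ (m2 * abar) - h2 * W) := by
        rw [mul_add, ← hkeq, hepspp]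
      calc a * (g + epsPoly θ pp) + b * epsPoly θ abar
          = (q * k + a') * (g + epsPoly θ pp) + epsPoly θ (m1 * abar) := by
            rw [← hdiv, ← hbA]
        _ = q * (k * (g + epsPoly θ pp)) + a' * (g + epsPoly θ pp) + epsPoly θ (m1 * abar) := by
            rw [add_mul (q * k) a' (g + epsPoly θ pp), mul_assoc q k (g + epsPoly θ pp)]
        _ = q * W + (epsPoly θ (m3 * (m2 * abar)) - q * (h2 * W)) + a' * (g + epsPoly θ pp)
              + epsPoly θ (m1 * abar) := by
            rw [hkG, mul_add q W (epsPoly θ (m2 * abar) - h2 * W),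
              mul_sub q (epsPoly θ (m2 * abar)) (h2 * W), hm3]
        _ = a' * (g + epsPoly θ pp) + epsPoly θ (M * abar) + (q * W - q * (h2 * W)) := by
            rw [hMsplit]
            abel
        _ = (a' + epsPoly θ w3) * (g + epsPoly θ pp) + epsPoly θ (s * abar)
              + (q * W + epsPoly θ w2 * W - q * (h2 * W)) := by
            rw [e2, add_mul a' (epsPoly θ w3) (g + epsPoly θ pp)]
            abel
    have hQv : QvFun θ (n - r) (fun i => SkewPoly.coeff (a' + epsPoly θ w3) (i : ℕ))
        = a' + epsPoly θ w3 := by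
      apply SkewPoly.ext'
      intro j
      rw [coeff_QvFun]
      by_cases hj : j < n - r
      · rw [dif_pos hj]
      · rw [dif_neg hj]
        rw [SkewPoly.coeff_add', ha' j (by omega), coeff_epsPoly, hw3c j (by omega), inr_zero,
          add_zero]
    have hSw : SwFun (r - t) (fun i => s.coeff (i : ℕ)) = s := by
      apply Polynomial.ext
      intro j
      rw [coeff_SwFun]
      by_cases hj : j < r - t
      · rw [dif_pos hj]
      · rw [dif_neg hj]
        exact (hscoeff j (by omega)).symm
    refine ⟨(fun i => SkewPoly.coeff (a' + epsPoly θ w3) (i : ℕ),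
      fun i => s.coeff (i : ℕ)), ?_⟩
    apply Subtype.ext
    show (Ideal.span {W}).mkQ
        (QvFun θ (n - r) (fun i => SkewPoly.coeff (a' + epsPoly θ w3) (i : ℕ))
          * (g + epsPoly θ pp)
          + epsPoly θ (SwFun (r - t) (fun i => s.coeff (i : ℕ)) * abar)) = x
    rw [hQv, hSw]
    have hx2 : (Ideal.span {W}).mkQ (a * (g + epsPoly θ pp) + b * epsPoly θ abar) = x := by
      rw [← hx, map_add, ← smul_eq_mul, ← smul_eq_mul, map_smul, map_smul]
    rw [← hx2, ebig, ← mul_assoc q h2 W]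
    simp only [map_add, map_sub, hker, add_zero, sub_zero]
  have hbij : Function.Bijective Φ := ⟨hΦinj, hΦsurj⟩
  have hcards := Nat.card_eq_of_bijective Φ hbij
  rw [← hcards, Nat.card_prod, Nat.card_fun, Nat.card_fun,
    Nat.card_eq_fintype_card (α := Fin (n - r)), Nat.card_eq_fintype_card (α := Fin (r - t)),
    Fintype.card_fin, Fintype.card_fin, Nat.card_zmod]
  have hD : Nat.card (DualNumber (ZMod p)) = p ^ 2 := by
    have h1 : Nat.card (DualNumber (ZMod p)) = Nat.card (ZMod p × ZMod p) := rfl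
    rw [h1, Nat.card_prod, Nat.card_zmod, sq]
  rw [hD, ← pow_mul]
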